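/- For every integer n ≥ 5 and every non-edge e of the Kneser graph K(n,2) (an unordered pair of distinct non-adjacent vertices), the graph K(n,2)+e contains an induced path on 6 vertices. -/

import Mathlib

open SimpleGraph

/-- The Kneser graph `K(n,2)`: vertices are the 2-element subsets of `{1,…,n}`,
adjacent iff disjoint. -/
def kneser (n : ℕ) : SimpleGraph {s : Finset (Fin n) // s.card = 2} where
  Adj u v := Disjoint u.1 v.1
  symm := ⟨fun u v h => h.symm⟩
  loopless := by
    constructor
    intro u h
    have h0 : u.1 = ∅ := disjoint_self.mp h
    have h2 := u.2
    rw [h0] at h2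
    simp at h2

namespace KneserAux

abbrev V5 := {s : Finset (Fin 5) // s.card = 2}

def u0 : V5 := ⟨{0,1}, by decide⟩
def v0 : V5 := ⟨{0,2}, by decide⟩

/-- kneser 5 plus the edge u0v0, with explicit adjacency. -/
def G0 : SimpleGraph V5 where
  Adj s t := Disjoint s.1 t.1 ∨ (s = u0 ∧ t = v0) ∨ (s = v0 ∧ t = u0)
  symm := by
    constructor
    rintro s t (h | h | h)
    · exact Or.inl h.symm
    · exact Or.inr (Or.inr ⟨h.2, h.1⟩)
    · exact Or.inr (Or.inl ⟨h.2, h.1⟩)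
  loopless := by
    constructor
    rintro s (h | ⟨h1, h2⟩ | ⟨h1, h2⟩)
    · have h0 : s.1 = ∅ := disjoint_self.mp h
      have h2 := s.2
      rw [h0] at h2
      simp at h2
    · exact absurd (h1.symm.trans h2) (by decide)
    · exact absurd (h1.symm.trans h2) (by decide)

instance : DecidableRel G0.Adj := fun s t => by unfold G0; infer_instance

instance : DecidableRel (pathGraph 6).Adj := fun a b =>
  decidable_of_iff _ pathGraph_adj.symm

def p : Fin 6 → V5 :=
  ![u0, v0, ⟨{1,3}, by decide⟩, ⟨{0,4}, by decide⟩, ⟨{1,2}, by decide⟩, ⟨{0,3}, by decide⟩]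

lemma p_inj : Function.Injective p := by decide

lemma p_rel : ∀ a b : Fin 6, G0.Adj (p a) (p b) ↔ (pathGraph 6).Adj a b := by decide

def e1 : pathGraph 6 ↪g G0 :=
  ⟨⟨p, p_inj⟩, fun {a b} => p_rel a b⟩

lemma inj5 {n : ℕ} (a b c d e : Fin n) (hab : a ≠ b) (hac : a ≠ c) (hbc : b ≠ c)
    (hda : d ≠ a) (hdb : d ≠ b) (hdc : d ≠ c) (hea : e ≠ a) (heb : e ≠ b) (hec : e ≠ c)
    (hde : d ≠ e) : Function.Injective ![a, b, c, d, e] := by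
  intro i j hij
  fin_cases i <;> fin_cases j <;> simp_all

end KneserAux

open KneserAux in
/-- For every integer `n ≥ 5` and every non-edge of `K(n,2)` (an unordered pair of distinct
non-adjacent vertices), adding that non-edge creates an induced path on 6 vertices. -/
theorem kneser_addNonEdge_induced_P6 (n : ℕ) (hn : 5 ≤ n)
    (u v : {s : Finset (Fin n) // s.card = 2}) (huv : u ≠ v) (hna : ¬ (kneser n).Adj u v) :
    Nonempty (pathGraph 6 ↪g (kneser n ⊔ SimpleGraph.fromEdgeSet {s(u, v)})) := by
  -- extract common element a and remaining b, c
  obtain ⟨a, hau, hav⟩ := Finset.not_disjoint_iff.mp hna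
  obtain ⟨b, hb⟩ : ∃ b, u.1.erase a = {b} := Finset.card_eq_one.mp (by
    rw [Finset.card_erase_of_mem hau, u.2])
  obtain ⟨c, hc⟩ : ∃ c, v.1.erase a = {c} := Finset.card_eq_one.mp (by
    rw [Finset.card_erase_of_mem hav, v.2])
  have hu1 : u.1 = {a, b} := by rw [← Finset.insert_erase hau, hb]
  have hv1 : v.1 = {a, c} := by rw [← Finset.insert_erase hav, hc]
  have hba : b ≠ a := by
    have hmem : b ∈ u.1.erase a := by rw [hb]; exact Finset.mem_singleton_self b
    exact Finset.ne_of_mem_erase hmem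
  have hca : c ≠ a := by
    have hmem : c ∈ v.1.erase a := by rw [hc]; exact Finset.mem_singleton_self c
    exact Finset.ne_of_mem_erase hmem
  have hbc : b ≠ c := by
    intro h
    exact huv (Subtype.ext (by rw [hu1, hv1, h]))
  -- pick two more elements d, e
  have hcard : 1 < ({a, b, c}ᶜ : Finset (Fin n)).card := by
    rw [Finset.card_compl]
    have h3 : ({a, b, c} : Finset (Fin n)).card ≤ 3 :=
      (Finset.card_insert_le _ _).trans (by
        simpa using Nat.add_le_add_right (Finset.card_insert_le b {c}) 1)
    have h4 : (3 : ℕ) + 1 < Fintype.card (Fin n) := by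
      rw [Fintype.card_fin]; omega
    omega
  obtain ⟨d, hd, e, he, hde⟩ := Finset.one_lt_card.mp hcard
  rw [Finset.mem_compl, Finset.mem_insert, not_or, Finset.mem_insert, not_or,
    Finset.mem_singleton] at hd he
  obtain ⟨hda, hdb, hdc⟩ := hd
  obtain ⟨hea, heb, hec⟩ := he
  -- the injection Fin 5 → Fin n
  have hginj : Function.Injective ![a, b, c, d, e] :=
    inj5 a b c d e (Ne.symm hba) (Ne.symm hca) hbc hda hdb hdc hea heb hec hde
  set g : Fin 5 → Fin n := ![a, b, c, d, e] with hg
  -- vertex map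
  have hcardF : ∀ s : V5, (s.1.image g).card = 2 := fun s => by
    rw [Finset.card_image_of_injective _ hginj, s.2]
  set F : V5 → {s : Finset (Fin n) // s.card = 2} := fun s => ⟨s.1.image g, hcardF s⟩ with hF
  have hFinj : Function.Injective F := by
    intro s t hst
    exact Subtype.ext (Finset.image_injective hginj (congrArg Subtype.val hst))
  have hFu0 : F u0 = u := by
    apply Subtype.ext
    show (Finset.image g {0, 1}) = u.1
    rw [hu1]
    simp [hg]
  have hFv0 : F v0 = v := by
    apply Subtype.ext
    show (Finset.image g {0, 2}) = v.1
    rw [hv1]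
    simp [hg]
  -- the embedding G0 ↪g kneser n + uv
  have hrel : ∀ s t : V5,
      (kneser n ⊔ SimpleGraph.fromEdgeSet {s(u, v)}).Adj (F s) (F t) ↔ G0.Adj s t := by
    intro s t
    show (kneser n).Adj (F s) (F t) ∨ _ ↔ _
    rw [SimpleGraph.fromEdgeSet_adj]
    show Disjoint ((F s).1) ((F t).1) ∨ _ ↔
      Disjoint s.1 t.1 ∨ (s = u0 ∧ t = v0) ∨ (s = v0 ∧ t = u0)
    simp only [Set.mem_singleton_iff, Sym2.eq, Sym2.rel_iff', Prod.mk.injEq,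
      Prod.swap_prod_mk]
    constructor
    · rintro (h | ⟨(⟨h1, h2⟩ | ⟨h1, h2⟩), hne⟩)
      · exact Or.inl ((Finset.disjoint_image hginj).mp h)
      · exact Or.inr (Or.inl ⟨hFinj (h1.trans hFu0.symm), hFinj (h2.trans hFv0.symm)⟩)
      · exact Or.inr (Or.inr ⟨hFinj (h1.trans hFv0.symm), hFinj (h2.trans hFu0.symm)⟩)
    · rintro (h | ⟨h1, h2⟩ | ⟨h1, h2⟩)
      · exact Or.inl ((Finset.disjoint_image hginj).mpr h)
      · subst h1 h2
        exact Or.inr ⟨Or.inl ⟨hFu0, hFv0⟩, by rw [hFu0, hFv0]; exact huv⟩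
      · subst h1 h2
        exact Or.inr ⟨Or.inr ⟨hFv0, hFu0⟩, by rw [hFu0, hFv0]; exact fun h => huv h.symm⟩
  exact ⟨SimpleGraph.Embedding.comp ⟨⟨F, hFinj⟩, fun {s t} => hrel s t⟩ e1⟩
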